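/- (Strict functoriality of blackboxed path problem on functional open R-matrices.) Let M be an R-matrix on A with legs i : X → A and j : Y → A, and N an R-matrix on B with legs i' : Y → B and j' : Z → B, such that every i(x) is a source of M, every j(y) is a sink of M, every i'(y) is a source of N, and every j'(z) is a sink of N, and such that j and i' are injective. Let P = A +_Y B be the pushout of sets of j and i', with injections a : A → P and b : B → P, and let S = a_*(M) ⊔ b_*(N). Then for all x ∈ X and z ∈ Z: F(S)( a(i(x)), b(j'(z)) ) = ⨆_{y∈Y} F(M)(i(x), j(y)) · F(N)(i'(y), j'(z)), where F(M) = ⨆_{n≥0} Mⁿ; that is, the blackboxed solution of the algebraic path problem of the composite equals the matrix product of the blackboxed solutions of the components: ■(★(M ∘ N)) = ■(★(M))·■(★(N)). -/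

import Mathlib

open IsQuantale

section Defs

variable {R : Type*} [CompleteLattice R] [CommMonoid R]

/-- The matrix product of two `R`-matrices: `(M N)(i,k) = ⨆ j, M i j * N j k`. -/
def matMul {X : Type*} (M N : X → X → R) : X → X → R :=
  fun i k => ⨆ j, M i j * N j k

/-- The identity `R`-matrix `1_X`: `1` on the diagonal and `⊥` off the diagonal. -/
def matId (X : Type*) : X → X → R :=
  fun i j => ⨆ _ : i = j, (1 : R)

/-- The `n`-fold matrix power, with `M⁰ = 1_X`. -/
def matPow {X : Type*} (M : X → X → R) : ℕ → X → X → R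
  | 0 => matId X
  | n + 1 => matMul M (matPow M n)

/-- The solution of the algebraic path problem: `F(M) = ⨆ n, Mⁿ`. -/
def pathF {X : Type*} (M : X → X → R) : X → X → R :=
  fun i j => ⨆ n, matPow M n i j

/-- An `R`-category on `X` is an `R`-matrix `C` with `1_X ≤ C` and `C·C ≤ C`. -/
def IsRCat {X : Type*} (C : X → X → R) : Prop :=
  matId X ≤ C ∧ matMul C C ≤ C

/-- The pushforward of an `R`-matrix along a function. -/
def pushforward {X Y : Type*} (f : X → Y) (M : X → X → R) : Y → Y → R :=
  fun y y' => ⨆ p : {q : X × X // f q.1 = y ∧ f q.2 = y'}, M p.1.1 p.1.2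

/-- The block sum `M ⊕ N` of two `R`-matrices on the disjoint union. -/
def blockSum {X Y : Type*} (M : X → X → R) (N : Y → Y → R) : (X ⊕ Y) → (X ⊕ Y) → R
  | Sum.inl x, Sum.inl x' => M x x'
  | Sum.inr y, Sum.inr y' => N y y'
  | _, _ => ⊥

/-- A vertex `v` is a source of `M` if `M c v = ⊥` for all `c`. -/
def IsSource {X : Type*} (M : X → X → R) (v : X) : Prop := ∀ c, M c v = ⊥

/-- A vertex `v` is a sink of `M` if `M v c = ⊥` for all `c`. -/
def IsSink {X : Type*} (M : X → X → R) (v : X) : Prop := ∀ c, M v c = ⊥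

end Defs

/-- The relation generating the pushout of sets of `f : Z → X` and `g : Z → Y`. -/
def pushoutRel {Z X Y : Type*} (f : Z → X) (g : Z → Y) : (X ⊕ Y) → (X ⊕ Y) → Prop :=
  fun p q => ∃ z, p = Sum.inl (f z) ∧ q = Sum.inr (g z)

/-- The pushout of sets `X +_Z Y`: the quotient of the disjoint union `X ⊕ Y`
by the equivalence relation generated by `f z ∼ g z`. -/
def SetPushout {Z X Y : Type*} (f : Z → X) (g : Z → Y) : Type _ :=
  Quot (pushoutRel f g)

/-- The first injection `X → X +_Z Y` into the pushout of sets. -/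
def poInl {Z X Y : Type*} (f : Z → X) (g : Z → Y) : X → SetPushout f g :=
  fun x => Quot.mk _ (Sum.inl x)

/-- The second injection `Y → X +_Z Y` into the pushout of sets. -/
def poInr {Z X Y : Type*} (f : Z → X) (g : Z → Y) : Y → SetPushout f g :=
  fun y => Quot.mk _ (Sum.inr y)

section QAux
variable {R : Type*} [CompleteLattice R] [CommMonoid R] [IsQuantale R]

lemma qmul_bot (x : R) : x * ⊥ = ⊥ := by
  rw [← sSup_empty, mul_sSup_distrib]; simp

lemma qmul_iSup {ι : Sort*} (x : R) (f : ι → R) : x * ⨆ i, f i = ⨆ i, x * f i := by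
  rw [iSup, mul_sSup_distrib, iSup_range]

lemma qiSup_mul {ι : Sort*} (x : R) (f : ι → R) : (⨆ i, f i) * x = ⨆ i, f i * x := by
  rw [iSup, sSup_mul_distrib, iSup_range]

lemma qbot_mul (x : R) : ⊥ * x = ⊥ := by
  rw [← sSup_empty, sSup_mul_distrib]; simp

lemma pf_le {X Y : Type*} {f : X → Y} {M : X → X → R} {p q : Y} {r : R}
    (h : ∀ u u', f u = p → f u' = q → M u u' ≤ r) : pushforward f M p q ≤ r :=
  iSup_le fun s => h s.1.1 s.1.2 s.2.1 s.2.2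

lemma le_pf {X Y : Type*} {f : X → Y} {M : X → X → R} {p q : Y} {u u' : X}
    (h1 : f u = p) (h2 : f u' = q) : M u u' ≤ pushforward f M p q :=
  le_iSup_of_le ⟨(u, u'), h1, h2⟩ le_rfl

lemma matId_self {X : Type*} (u : X) : (matId X u u : R) = 1 := by
  simp [matId]

lemma matId_of_ne {X : Type*} {u v : X} (h : u ≠ v) : (matId X u v : R) = ⊥ := by
  simp [matId, h]

lemma matPow_one {X : Type*} (M : X → X → R) (u v : X) : matPow M 1 u v = M u v := by
  classical
  show matMul M (matId X) u v = M u v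
  apply le_antisymm
  · apply iSup_le
    intro w
    by_cases hw : w = v
    · subst hw; rw [matId_self, mul_one]
    · rw [matId_of_ne hw, qmul_bot]; exact bot_le
  · have h2 : M u v * (matId X v v : R) ≤ ⨆ w, M u w * matId X w v :=
      le_iSup (fun w => M u w * matId X w v) v
    rwa [matId_self, mul_one] at h2

end QAux

section PoAux

variable {Y A B : Type*} {j : Y → A} {i' : Y → B}

open Classical in
noncomputable def poNorm (j : Y → A) (i' : Y → B) : A ⊕ B → A ⊕ B
  | .inl u => .inl u
  | .inr v => if h : ∃ y, i' y = v then .inl (j h.choose) else .inr v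

lemma poNorm_rel (hi' : Function.Injective i') :
    ∀ p q, pushoutRel j i' p q → poNorm j i' p = poNorm j i' q := by
  rintro p q ⟨y, rfl, rfl⟩
  have h : ∃ y', i' y' = i' y := ⟨y, rfl⟩
  simp only [poNorm, dif_pos h]
  exact congrArg Sum.inl (congrArg j (hi' h.choose_spec)).symm

lemma poNorm_eq (hi' : Function.Injective i') {p q : A ⊕ B}
    (h : Quot.mk (pushoutRel j i') p = Quot.mk (pushoutRel j i') q) :
    poNorm j i' p = poNorm j i' q :=
  congrArg (Quot.lift (poNorm j i') (poNorm_rel hi')) h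

lemma poInl_injective (hi' : Function.Injective i') :
    Function.Injective (poInl j i') := by
  intro c c' h
  have := poNorm_eq hi' (p := Sum.inl c) (q := Sum.inl c') h
  simpa [poNorm] using this

lemma poInr_injective (hj : Function.Injective j) (hi' : Function.Injective i') :
    Function.Injective (poInr j i') := by
  classical
  intro d d' h
  have h2 := poNorm_eq hi' (p := Sum.inr d) (q := Sum.inr d') h
  simp only [poNorm] at h2
  by_cases hd : ∃ y, i' y = d
  · by_cases hd' : ∃ y, i' y = d'
    · rw [dif_pos hd, dif_pos hd'] at h2
      have := hj (Sum.inl.inj h2)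
      rw [← hd.choose_spec, ← hd'.choose_spec, this]
    · rw [dif_pos hd, dif_neg hd'] at h2; exact absurd h2 (by simp)
  · by_cases hd' : ∃ y, i' y = d'
    · rw [dif_neg hd, dif_pos hd'] at h2; exact absurd h2 (by simp)
    · rw [dif_neg hd, dif_neg hd'] at h2; exact Sum.inr.inj h2

lemma po_glue (y : Y) : poInl j i' (j y) = poInr j i' (i' y) :=
  Quot.sound ⟨y, rfl, rfl⟩

lemma poInl_eq_poInr (hi' : Function.Injective i') {c : A} {d : B} :
    poInl j i' c = poInr j i' d ↔ ∃ y, c = j y ∧ d = i' y := by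
  classical
  constructor
  · intro h
    have h2 := poNorm_eq hi' (p := Sum.inl c) (q := Sum.inr d) h
    simp only [poNorm] at h2
    by_cases hd : ∃ y, i' y = d
    · rw [dif_pos hd] at h2
      exact ⟨hd.choose, (Sum.inl.inj h2), hd.choose_spec.symm⟩
    · rw [dif_neg hd] at h2; exact absurd h2 (by simp)
  · rintro ⟨y, rfl, rfl⟩; exact po_glue y

end PoAux

section MoreAux

lemma po_ind {Z X Y : Type*} {f : Z → X} {g : Z → Y} {β : SetPushout f g → Prop}
    (hl : ∀ x, β (poInl f g x)) (hr : ∀ y, β (poInr f g y)) : ∀ q, β q := by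
  intro q
  refine Quot.ind (fun s => ?_) q
  cases s with
  | inl u => exact hl u
  | inr v => exact hr v

end MoreAux

/-- Strict functoriality of the blackboxed path problem on functional open
`R`-matrices: with `M` on `A` (legs `i : X → A`, `j : Y → A`), `N` on `B`
(legs `i' : Y → B`, `j' : Z → B`), inputs sources, outputs sinks, `j` and `i'`
injective, `P = A +_Y B` the pushout of sets with injections `a, b`, and
`S = a_*(M) ⊔ b_*(N)`, we have
`F(S)(a (i x), b (j' z)) = ⨆ y, F(M)(i x, j y) · F(N)(i' y, j' z)`,
i.e. `■(★(M ∘ N)) = ■(★(M)) · ■(★(N))`. -/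
theorem blackbox_star_strict {R : Type*} [CompleteLattice R] [CommMonoid R]
    [IsQuantale R] {A B X Y Z : Type*}
    (M : A → A → R) (i : X → A) (j : Y → A)
    (N : B → B → R) (i' : Y → B) (j' : Z → B)
    (hMsource : ∀ x : X, IsSource M (i x)) (hMsink : ∀ y : Y, IsSink M (j y))
    (hNsource : ∀ y : Y, IsSource N (i' y)) (hNsink : ∀ z : Z, IsSink N (j' z))
    (hj : Function.Injective j) (hi' : Function.Injective i') :
    ∀ (x : X) (z : Z),
      pathF (pushforward (poInl j i') M ⊔ pushforward (poInr j i') N)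
          (poInl j i' (i x)) (poInr j i' (j' z)) =
        ⨆ y : Y, pathF M (i x) (j y) * pathF N (i' y) (j' z) := by
  classical
  intro x z
  set a : A → SetPushout j i' := poInl j i' with ha
  set b : B → SetPushout j i' := poInr j i' with hb
  set S : SetPushout j i' → SetPushout j i' → R :=
    pushforward a M ⊔ pushforward b N with hSdef
  have ainj : Function.Injective a := poInl_injective hi'
  have binj : Function.Injective b := poInr_injective hj hi'
  have hab : ∀ {c : A} {d : B}, a c = b d ↔ ∃ y, c = j y ∧ d = i' y :=
    fun {c d} => poInl_eq_poInr hi'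
  have hglue : ∀ y, a (j y) = b (i' y) := fun y => po_glue y
  have hSapp : ∀ p q, S p q = pushforward a M p q ⊔ pushforward b N p q :=
    fun _ _ => rfl
  -- edge value lemmas
  have hSaa : ∀ c c', S (a c) (a c') = M c c' := by
    intro c c'
    rw [hSapp]
    apply le_antisymm
    · apply sup_le
      · apply pf_le; intro u u' h1 h2
        exact le_of_eq (by rw [ainj h1, ainj h2])
      · apply pf_le; intro u u' h1 h2
        obtain ⟨y, _, hy2⟩ := hab.mp h2.symm
        rw [hy2, hNsource y u]
        exact bot_le
    · exact le_sup_of_le_left (le_pf rfl rfl)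
  have hSab : ∀ c d', S (a c) (b d') =
      (⨆ y, ⨆ _ : i' y = d', M c (j y)) ⊔ (⨆ y, ⨆ _ : j y = c, N (i' y) d') := by
    intro c d'
    rw [hSapp]
    apply le_antisymm
    · apply sup_le
      · apply pf_le; intro u u' h1 h2
        obtain ⟨y, hy1, hy2⟩ := hab.mp h2
        refine le_sup_of_le_left (le_iSup_of_le y (le_iSup_of_le hy2.symm ?_))
        exact le_of_eq (by rw [ainj h1, hy1])
      · apply pf_le; intro u u' h1 h2
        obtain ⟨y, hy1, hy2⟩ := hab.mp h1.symm
        refine le_sup_of_le_right (le_iSup_of_le y (le_iSup_of_le hy1.symm ?_))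
        exact le_of_eq (by rw [hy2, binj h2])
    · apply sup_le
      · refine iSup_le fun y => iSup_le fun hy => ?_
        refine le_sup_of_le_left (le_pf rfl ?_)
        rw [hglue y, hy]
      · refine iSup_le fun y => iSup_le fun hy => ?_
        refine le_sup_of_le_right (le_pf ?_ rfl)
        rw [← hglue y, hy]
  have hSba : ∀ d c, S (b d) (a c) = ⊥ := by
    intro d c
    rw [hSapp]
    apply le_antisymm
    · apply sup_le
      · apply pf_le; intro u u' h1 _
        obtain ⟨y, hy1, _⟩ := hab.mp h1
        rw [hy1, hMsink y u']
      · apply pf_le; intro u u' _ h2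
        obtain ⟨y, _, hy2⟩ := hab.mp h2.symm
        rw [hy2, hNsource y u]
    · exact bot_le
  have hSbb : ∀ d d', S (b d) (b d') = N d d' := by
    intro d d'
    rw [hSapp]
    apply le_antisymm
    · apply sup_le
      · apply pf_le; intro u u' h1 _
        obtain ⟨y, hy1, _⟩ := hab.mp h1
        rw [hy1, hMsink y u']
        exact bot_le
      · apply pf_le; intro u u' h1 h2
        exact le_of_eq (by rw [binj h1, binj h2])
    · exact le_sup_of_le_right (le_pf rfl rfl)
  -- the key induction
  have key : ∀ n : ℕ,
      (∀ d, matPow S n (b d) (b (j' z)) = matPow N n d (j' z)) ∧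
      (∀ c, matPow S n (a c) (b (j' z)) =
        ⨆ y, ⨆ m, ⨆ k, ⨆ _ : m + k = n,
          matPow M m c (j y) * matPow N k (i' y) (j' z)) := by
    intro n
    induction n with
    | zero =>
      constructor
      · intro d
        show (⨆ _ : b d = b (j' z), (1 : R)) = ⨆ _ : d = j' z, (1 : R)
        apply le_antisymm
        · exact iSup_le fun h => le_iSup_of_le (binj h) le_rfl
        · exact iSup_le fun h => le_iSup_of_le (congrArg b h) le_rfl
      · intro c
        apply le_antisymm
        · refine iSup_le fun h => ?_
          obtain ⟨y, hc, hz⟩ := hab.mp h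
          refine le_iSup_of_le y (le_iSup_of_le 0 (le_iSup_of_le 0 (le_iSup_of_le rfl ?_)))
          show (1 : R) ≤ matId A c (j y) * matId B (i' y) (j' z)
          rw [hc, ← hz]
          simp only [matId_self, one_mul]
          exact le_rfl
        · refine iSup_le fun y => iSup_le fun m => iSup_le fun k => iSup_le fun hmk => ?_
          obtain ⟨rfl, rfl⟩ : m = 0 ∧ k = 0 := by omega
          show matId A c (j y) * matId B (i' y) (j' z) ≤ ⨆ _ : a c = b (j' z), (1 : R)
          by_cases hc : c = j y
          · by_cases hz : i' y = j' z
            · have hpq : a (j y) = b (j' z) := by rw [← hz]; exact hglue y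
              rw [hc, hz]
              simp only [matId_self, one_mul]
              exact le_iSup_of_le hpq le_rfl
            · rw [matId_of_ne hz, qmul_bot]
              exact bot_le
          · rw [matId_of_ne hc, qbot_mul]
            exact bot_le
    | succ n ih =>
      obtain ⟨ihB, ihA⟩ := ih
      constructor
      · intro d
        show (⨆ q, S (b d) q * matPow S n q (b (j' z))) = matMul N (matPow N n) d (j' z)
        apply le_antisymm
        · refine iSup_le (po_ind (fun c' => ?_) (fun d' => ?_))
          · show S (b d) (a c') * matPow S n (a c') (b (j' z)) ≤ _
            rw [hSba, qbot_mul]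
            exact bot_le
          · show S (b d) (b d') * matPow S n (b d') (b (j' z)) ≤
              ⨆ d'', N d d'' * matPow N n d'' (j' z)
            rw [hSbb, ihB d']
            exact le_iSup (fun d'' => N d d'' * matPow N n d'' (j' z)) d'
        · show (⨆ d', N d d' * matPow N n d' (j' z)) ≤ _
          refine iSup_le fun d' => ?_
          rw [← ihB d', ← hSbb d d']
          exact le_iSup (fun q => S (b d) q * matPow S n q (b (j' z))) (b d')
      · intro c
        show (⨆ q, S (a c) q * matPow S n q (b (j' z))) = _
        apply le_antisymm
        · refine iSup_le (po_ind (fun c' => ?_) (fun d' => ?_))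
          · show S (a c) (a c') * matPow S n (a c') (b (j' z)) ≤ _
            rw [hSaa, ihA c']
            rw [qmul_iSup]
            refine iSup_le fun y => ?_
            rw [qmul_iSup]
            refine iSup_le fun m => ?_
            rw [qmul_iSup]
            refine iSup_le fun k => ?_
            rw [qmul_iSup]
            refine iSup_le fun hmk => ?_
            refine le_iSup_of_le y (le_iSup_of_le (m + 1)
              (le_iSup_of_le k (le_iSup_of_le (by omega) ?_)))
            rw [← mul_assoc]
            refine mul_le_mul_left ?_ _
            show M c c' * matPow M m c' (j y) ≤ ⨆ c'', M c c'' * matPow M m c'' (j y)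
            exact le_iSup (fun c'' => M c c'' * matPow M m c'' (j y)) c'
          · show S (a c) (b d') * matPow S n (b d') (b (j' z)) ≤ _
            rw [hSab, ihB d', Quantale.sup_mul_distrib]
            apply sup_le
            · rw [qiSup_mul]
              refine iSup_le fun y => ?_
              rw [qiSup_mul]
              refine iSup_le fun hy => ?_
              subst hy
              refine le_iSup_of_le y (le_iSup_of_le 1
                (le_iSup_of_le n (le_iSup_of_le (by omega) ?_)))
              exact le_of_eq (by rw [matPow_one])
            · rw [qiSup_mul]
              refine iSup_le fun y => ?_
              rw [qiSup_mul]
              refine iSup_le fun hy => ?_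
              refine le_iSup_of_le y (le_iSup_of_le 0
                (le_iSup_of_le (n + 1) (le_iSup_of_le (by omega) ?_)))
              show N (i' y) d' * matPow N n d' (j' z) ≤
                matId A c (j y) * matMul N (matPow N n) (i' y) (j' z)
              rw [← hy, matId_self, one_mul]
              exact le_iSup (fun d'' => N (i' y) d'' * matPow N n d'' (j' z)) d'
        · refine iSup_le fun y => iSup_le fun m => iSup_le fun k => iSup_le fun hmk => ?_
          cases m with
          | zero =>
            obtain rfl : k = n + 1 := by omega
            show matId A c (j y) * matMul N (matPow N n) (i' y) (j' z) ≤ _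
            by_cases hc : c = j y
            · rw [hc, matId_self, one_mul]
              show (⨆ d'', N (i' y) d'' * matPow N n d'' (j' z)) ≤
                ⨆ q, S (a (j y)) q * matPow S n q (b (j' z))
              refine iSup_le fun d'' => ?_
              refine le_iSup_of_le (b d'') ?_
              rw [ihB d'']
              refine mul_le_mul_left ?_ _
              rw [hSab]
              exact le_sup_of_le_right (le_iSup_of_le y (le_iSup_of_le rfl le_rfl))
            · rw [matId_of_ne hc, qbot_mul]
              exact bot_le
          | succ m =>
            show (⨆ c', M c c' * matPow M m c' (j y)) * matPow N k (i' y) (j' z) ≤ _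
            rw [qiSup_mul]
            refine iSup_le fun c' => ?_
            rw [mul_assoc]
            show _ ≤ ⨆ q, S (a c) q * matPow S n q (b (j' z))
            refine le_iSup_of_le (a c') ?_
            rw [hSaa, ihA c']
            refine mul_le_mul_right ?_ _
            exact le_iSup_of_le y (le_iSup_of_le m
              (le_iSup_of_le k (le_iSup_of_le (by omega) le_rfl)))
  -- conclusion
  show (⨆ n, matPow S n (a (i x)) (b (j' z))) =
    ⨆ y, pathF M (i x) (j y) * pathF N (i' y) (j' z)
  apply le_antisymm
  · refine iSup_le fun n => ?_
    rw [(key n).2 (i x)]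
    refine iSup_le fun y => iSup_le fun m => iSup_le fun k => iSup_le fun hmk => ?_
    refine le_iSup_of_le y ?_
    exact mul_le_mul' (le_iSup (fun m => matPow M m (i x) (j y)) m)
      (le_iSup (fun k => matPow N k (i' y) (j' z)) k)
  · refine iSup_le fun y => ?_
    show (⨆ m, matPow M m (i x) (j y)) * (⨆ k, matPow N k (i' y) (j' z)) ≤ _
    rw [qiSup_mul]
    refine iSup_le fun m => ?_
    rw [qmul_iSup]
    refine iSup_le fun k => ?_
    refine le_iSup_of_le (m + k) ?_
    rw [(key (m + k)).2 (i x)]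
    exact le_iSup_of_le y (le_iSup_of_le m (le_iSup_of_le k (le_iSup_of_le rfl le_rfl)))
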